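/- Let q be a prime power with q ≡ 1 (mod 4), and let α be a non-square element of 𝔽_q^×. For (x,y) ∈ 𝔽_q², let L_{x,y} be the 2-dimensional subspace of 𝔽_q^4 spanned by (1, 0, x, y) and (0, 1, αy, x), and let L_∞ be the 2-dimensional subspace spanned by (0,0,1,0) and (0,0,0,1). Then 𝒮 = { L_{x,y} : (x,y) ∈ 𝔽_q² } ∪ { L_∞ } is a line spread of PG(3,q), i.e. these q²+1 two-dimensional subspaces pairwise intersect trivially and cover 𝔽_q^4; moreover no member of 𝒮 contains exactly one point of the elliptic quadric defined by F(X₀,X₁,X₂,X₃) = X₀X₁ + X₂² − αX₃², so that exactly (q²+1)/2 members of 𝒮 contain exactly two points of this quadric. -/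

import Mathlib

open Module Set

/-- The points of the quadric of `Q`: projective points spanned by singular vectors. -/
def QuadricPoints {F V : Type} [Field F] [AddCommGroup V] [Module F V]
    (Q : V → F) : Set (Submodule F V) :=
  {p | ∃ v : V, v ≠ 0 ∧ Q v = 0 ∧ p = Submodule.span F {v}}

/-- The quadratic form `X₀X₁ + X₂² - αX₃²` of the elliptic quadric `Q⁻(3,q)`,
for `α` a non-square. -/
def ellQuadricAlpha (F : Type) [Field F] (α : F) : (Fin 4 → F) → F :=
  fun v => v 0 * v 1 + v 2 ^ 2 - α * v 3 ^ 2

/-- The line `L_{x,y}`, spanned by `(1, 0, x, y)` and `(0, 1, αy, x)`. -/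
def lineXYAlpha (F : Type) [Field F] (α x y : F) : Submodule F (Fin 4 → F) :=
  Submodule.span F {![1, 0, x, y], ![0, 1, α * y, x]}

/-- The line `L_∞`, spanned by `(0,0,1,0)` and `(0,0,0,1)`. -/
def lineInf (F : Type) [Field F] : Submodule F (Fin 4 → F) :=
  Submodule.span F {![0, 0, 1, 0], ![0, 0, 0, 1]}

/-- The Desarguesian spread `𝒮 = { L_{x,y} : x,y ∈ F } ∪ { L_∞ }`. -/
def spreadAlpha (F : Type) [Field F] (α : F) : Set (Submodule F (Fin 4 → F)) :=
  {l | ∃ x y : F, l = lineXYAlpha F α x y} ∪ {lineInf F}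

section Helpers

variable {F : Type} [Field F]

lemma aniso {α : F} (hαns : ¬ IsSquare α) {a b : F} (h : a ^ 2 - α * b ^ 2 = 0) :
    a = 0 ∧ b = 0 := by
  by_cases hb : b = 0
  · subst hb
    refine ⟨?_, rfl⟩
    have : a ^ 2 = 0 := by linear_combination h
    exact pow_eq_zero_iff (by norm_num) |>.mp this
  · exact absurd ⟨a / b, by field_simp; linear_combination -h⟩ hαns

lemma mem_lineXY {α x y : F} {v : Fin 4 → F} :
    v ∈ lineXYAlpha F α x y ↔ v 2 = v 0 * x + v 1 * (α * y) ∧ v 3 = v 0 * y + v 1 * x := by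
  rw [lineXYAlpha, Submodule.mem_span_pair]
  constructor
  · rintro ⟨a, b, rfl⟩
    simp
  · rintro ⟨h2, h3⟩
    refine ⟨v 0, v 1, ?_⟩
    funext i
    fin_cases i <;> simp [h2, h3]

lemma mem_lineInf {v : Fin 4 → F} :
    v ∈ lineInf F ↔ v 0 = 0 ∧ v 1 = 0 := by
  rw [lineInf, Submodule.mem_span_pair]
  constructor
  · rintro ⟨a, b, rfl⟩
    simp
  · rintro ⟨h0, h1⟩
    refine ⟨v 2, v 3, ?_⟩
    funext i
    fin_cases i <;> simp [h0, h1]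

lemma span_singleton_eq_smul {v w : Fin 4 → F} (hw : w ≠ 0)
    (h : Submodule.span F {v} = Submodule.span F {w}) : ∃ c : F, c ≠ 0 ∧ w = c • v := by
  have hm : w ∈ Submodule.span F {v} := h ▸ Submodule.mem_span_singleton_self w
  obtain ⟨c, hc⟩ := Submodule.mem_span_singleton.mp hm
  refine ⟨c, ?_, hc.symm⟩
  rintro rfl
  simp at hc
  exact hw hc.symm

lemma finrank_span_pair {v w : Fin 4 → F}
    (h : ∀ s t : F, s • v + t • w = 0 → s = 0 ∧ t = 0) :
    Module.finrank F (Submodule.span F {v, w} : Submodule F (Fin 4 → F)) = 2 := by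
  have hr : ({v, w} : Set (Fin 4 → F)) = Set.range ![v, w] := by
    ext u
    simp [Fin.exists_fin_two, or_comm]
  rw [hr, finrank_span_eq_card (LinearIndependent.pair_iff.mpr h)]
  simp

lemma covering {α : F} (hαns : ¬ IsSquare α) (v : Fin 4 → F) :
    (∃ x y : F, v ∈ lineXYAlpha F α x y ∧ v 0 ^ 2 - α * v 1 ^ 2 ≠ 0) ∨
    (v ∈ lineInf F ∧ v 0 = 0 ∧ v 1 = 0) := by
  by_cases h01 : v 0 = 0 ∧ v 1 = 0
  · exact Or.inr ⟨mem_lineInf.mpr h01, h01⟩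
  · left
    have hd : v 0 ^ 2 - α * v 1 ^ 2 ≠ 0 := fun h => h01 (aniso hαns h)
    refine ⟨(v 0 * v 2 - α * v 1 * v 3) / (v 0 ^ 2 - α * v 1 ^ 2),
      (v 0 * v 3 - v 1 * v 2) / (v 0 ^ 2 - α * v 1 ^ 2), mem_lineXY.mpr ⟨?_, ?_⟩, hd⟩
    · field_simp
      ring
    · field_simp
      have hd' : v 0 ^ 2 - v 1 ^ 2 * α ≠ 0 := by rwa [mul_comm (v 1 ^ 2)]
      linear_combination (-(v 3)) * mul_inv_cancel₀ hd'

lemma disj_XY_XY {α : F} (hαns : ¬ IsSquare α) {x y x' y' : F}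
    (hne : ¬ (x = x' ∧ y = y')) :
    lineXYAlpha F α x y ⊓ lineXYAlpha F α x' y' = ⊥ := by
  rw [eq_bot_iff]
  rintro v ⟨h1, h2⟩
  obtain ⟨h12, h13⟩ := mem_lineXY.mp h1
  obtain ⟨h22, h23⟩ := mem_lineXY.mp h2
  have hXY : ¬ ((x - x') = 0 ∧ (y - y') = 0) := by
    intro ⟨hx, hy⟩
    exact hne ⟨sub_eq_zero.mp hx, sub_eq_zero.mp hy⟩
  have hD : (x - x') ^ 2 - α * (y - y') ^ 2 ≠ 0 := fun h => hXY (aniso hαns h)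
  have e1 : v 0 * (x - x') + v 1 * (α * (y - y')) = 0 := by linear_combination h22 - h12
  have e2 : v 0 * (y - y') + v 1 * (x - x') = 0 := by linear_combination h23 - h13
  have hv0 : v 0 = 0 := by
    have : v 0 * ((x - x') ^ 2 - α * (y - y') ^ 2) = 0 := by
      linear_combination (x - x') * e1 - α * (y - y') * e2
    exact (mul_eq_zero.mp this).resolve_right hD
  have hv1 : v 1 = 0 := by
    have : v 1 * ((x - x') ^ 2 - α * (y - y') ^ 2) = 0 := by
      linear_combination (x - x') * e2 - (y - y') * e1
    exact (mul_eq_zero.mp this).resolve_right hD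
  have : v = 0 := by
    funext i
    fin_cases i <;> simp [hv0, hv1, h12, h13, hv0, hv1]
  simp [this]

lemma disj_XY_Inf {α : F} {x y : F} :
    lineXYAlpha F α x y ⊓ lineInf F = ⊥ := by
  rw [eq_bot_iff]
  rintro v ⟨h1, h2⟩
  obtain ⟨h12, h13⟩ := mem_lineXY.mp h1
  obtain ⟨h0, h1'⟩ := mem_lineInf.mp h2
  have : v = 0 := by
    funext i
    fin_cases i <;> simp [h0, h1', h12, h13]
  simp [this]

lemma lineXY_ne_Inf {α : F} {x y : F} : lineXYAlpha F α x y ≠ lineInf F := by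
  intro h
  have hm : (![1, 0, x, y] : Fin 4 → F) ∈ lineXYAlpha F α x y := by
    rw [mem_lineXY]; constructor <;> simp
  rw [h, mem_lineInf] at hm
  simpa using hm.1

lemma lineXY_inj {α : F} {x y x' y' : F} (h : lineXYAlpha F α x y = lineXYAlpha F α x' y') :
    x = x' ∧ y = y' := by
  have hm : (![1, 0, x, y] : Fin 4 → F) ∈ lineXYAlpha F α x' y' := by
    rw [← h, mem_lineXY]; constructor <;> simp
  rw [mem_lineXY] at hm
  simpa using hm

/-- the vector `w s = s•e₁ + e₂` on `L_{x,y}` -/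
def wvec (α x y s : F) : Fin 4 → F := ![s, 1, s*x + α*y, s*y + x]

lemma wvec_ne_zero {α x y s : F} : wvec α x y s ≠ 0 := by
  intro h
  have := congrFun h 1
  simp [wvec] at this

lemma wvec_mem {α x y s : F} : wvec α x y s ∈ lineXYAlpha F α x y := by
  rw [mem_lineXY]
  constructor <;> simp [wvec]

lemma span_wvec_inj {α x y s s' : F}
    (h : Submodule.span F {wvec α x y s} = Submodule.span F {wvec α x y s'}) : s = s' := by
  obtain ⟨c, hc, hcs⟩ := span_singleton_eq_smul wvec_ne_zero h
  have h1 := congrFun hcs 1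
  have h0 := congrFun hcs 0
  simp [wvec] at h1 h0
  rw [← h1, one_mul] at h0
  exact h0.symm

lemma point_on_lineXY {α x y : F} {p : Submodule F (Fin 4 → F)}
    (hp : p ∈ QuadricPoints (ellQuadricAlpha F α) ∩ {p | p ≤ lineXYAlpha F α x y}) :
    (∃ v : Fin 4 → F, v ≠ 0 ∧ v 0 * v 1 + (x^2 - α*y^2) * (v 0 ^ 2 - α * v 1 ^ 2) = 0 ∧
      v ∈ lineXYAlpha F α x y ∧ p = Submodule.span F {v}) := by
  obtain ⟨⟨v, hv0, hQ, rfl⟩, hle⟩ := hp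
  have hvl : v ∈ lineXYAlpha F α x y :=
    hle (Submodule.mem_span_singleton_self v)
  obtain ⟨h2, h3⟩ := mem_lineXY.mp hvl
  refine ⟨v, hv0, ?_, hvl, rfl⟩
  rw [ellQuadricAlpha] at hQ
  rw [h2, h3] at hQ
  linear_combination hQ


lemma perline_dichotomy (hsq : IsSquare (-1 : F)) {α : F} (hα0 : α ≠ 0)
    (hαns : ¬ IsSquare α) {l : Submodule F (Fin 4 → F)} (hl : l ∈ spreadAlpha F α) :
    (QuadricPoints (ellQuadricAlpha F α) ∩ {p | p ≤ l}) = ∅ ∨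
    ∃ p1 p2 : Submodule F (Fin 4 → F), p1 ≠ p2 ∧
      (QuadricPoints (ellQuadricAlpha F α) ∩ {p | p ≤ l}) = {p1, p2} := by
  rcases hl with ⟨x, y, rfl⟩ | hinf
  · -- line L_{x,y}
    by_cases hd : x ^ 2 - α * y ^ 2 = 0
    · -- d = 0, i.e. x = y = 0 : two points
      obtain ⟨hx, hy⟩ := aniso hαns hd
      subst hx; subst hy
      right
      refine ⟨Submodule.span F {(![1,0,0,0] : Fin 4 → F)},
        Submodule.span F {(![0,1,0,0] : Fin 4 → F)}, ?_, ?_⟩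
      · intro h
        have hw : (![0,1,0,0] : Fin 4 → F) ≠ 0 := by
          intro h'
          have := congrFun h' 1
          simp at this
        obtain ⟨c, hc, hcs⟩ := span_singleton_eq_smul hw h
        have h1 := congrFun hcs 1
        simp at h1
      · ext p
        simp only [Set.mem_inter_iff, Set.mem_insert_iff, Set.mem_singleton_iff]
        constructor
        · intro hp
          obtain ⟨v, hv0, hQ, hvl, rfl⟩ := point_on_lineXY hp
          obtain ⟨h2, h3⟩ := mem_lineXY.mp hvl
          have hQ' : v 0 * v 1 = 0 := by linear_combination hQ
          rcases mul_eq_zero.mp hQ' with h0 | h1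
          · right
            have hv1 : v 1 ≠ 0 := by
              intro h1
              apply hv0
              funext i
              fin_cases i <;> simp [h0, h1, h2, h3]
            have hv : v = v 1 • ![0,1,0,0] := by
              funext i
              fin_cases i <;> simp [h0, h2, h3]
            rw [hv, Submodule.span_singleton_smul_eq (IsUnit.mk0 _ hv1)]
          · left
            have hv00 : v 0 ≠ 0 := by
              intro h0
              apply hv0
              funext i
              fin_cases i <;> simp [h0, h1, h2, h3]
            have hv : v = v 0 • ![1,0,0,0] := by
              funext i
              fin_cases i <;> simp [h1, h2, h3]
            rw [hv, Submodule.span_singleton_smul_eq (IsUnit.mk0 _ hv00)]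
        · have hmem : ∀ w : Fin 4 → F, w ≠ 0 → ellQuadricAlpha F α w = 0 →
              w ∈ lineXYAlpha F α 0 0 →
              Submodule.span F {w} ∈
                QuadricPoints (ellQuadricAlpha F α) ∩ {p | p ≤ lineXYAlpha F α 0 0} :=
            fun w hw hQw hwl => ⟨⟨w, hw, hQw, rfl⟩,
              (Submodule.span_singleton_le_iff_mem _ _).mpr hwl⟩
          rintro (rfl | rfl)
          · refine hmem _ ?_ ?_ ?_
            · intro h'; have := congrFun h' 0; simp at this
            · simp [ellQuadricAlpha]
            · rw [mem_lineXY]; constructor <;> simp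
          · refine hmem _ ?_ ?_ ?_
            · intro h'; have := congrFun h' 1; simp at this
            · simp [ellQuadricAlpha]
            · rw [mem_lineXY]; constructor <;> simp
    · -- d ≠ 0
      set d := x ^ 2 - α * y ^ 2 with hd_def
      by_cases hroot : ∃ t : F, d * t ^ 2 + t - α * d = 0
      · right
        obtain ⟨t, ht⟩ := hroot
        have ht0 : t ≠ 0 := by
          rintro rfl
          simp at ht
          rcases ht with h | h
          · exact hα0 h
          · exact hd h
        set t' := -α * t⁻¹ with ht'_def
        have key : t ^ 2 * (d * t' ^ 2 + t' - α * d) = (-α) * (d * t ^ 2 + t - α * d) := by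
          rw [ht'_def]
          field_simp
          ring
        have ht' : d * t' ^ 2 + t' - α * d = 0 := by
          rw [ht, mul_zero] at key
          exact (mul_eq_zero.mp key).resolve_left (pow_ne_zero _ ht0)
        have htt' : t ≠ t' := by
          intro h
          apply hαns
          obtain ⟨c, hc⟩ := hsq
          have ht2 : t * t = -α := by
            have h2 : t * t = (-α * t⁻¹) * t := by rw [← ht'_def, ← h]
            rwa [mul_assoc, inv_mul_cancel₀ ht0, mul_one] at h2
          exact ⟨c * t, by linear_combination (-α) * hc - c ^ 2 * ht2⟩
        refine ⟨Submodule.span F {wvec α x y t}, Submodule.span F {wvec α x y t'}, ?_, ?_⟩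
        · intro h
          exact htt' (span_wvec_inj h)
        · ext p
          simp only [Set.mem_inter_iff, Set.mem_insert_iff, Set.mem_singleton_iff]
          constructor
          · intro hp
            obtain ⟨v, hv0, hQ, hvl, rfl⟩ := point_on_lineXY hp
            obtain ⟨h2, h3⟩ := mem_lineXY.mp hvl
            have hv1 : v 1 ≠ 0 := by
              intro h1
              have hz : d * v 0 ^ 2 = 0 := by
                rw [hd_def]
                linear_combination hQ + (-(v 0) + α * (x^2 - α*y^2) * (v 1)) * h1
              have hv00 : v 0 = 0 := by
                have := (mul_eq_zero.mp hz).resolve_left hd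
                exact pow_eq_zero_iff (by norm_num) |>.mp this
              apply hv0
              funext i
              fin_cases i <;> simp [hv00, h1, h2, h3]
            set s := v 0 / v 1 with hs_def
            have hs : d * s ^ 2 + s - α * d = 0 := by
              rw [hs_def]
              field_simp
              linear_combination hQ
            have hfac' : d * ((s - t) * (s * t + α)) = 0 := by
              linear_combination t * hs - s * ht
            have hfac : (s - t) * (s * t + α) = 0 := (mul_eq_zero.mp hfac').resolve_left hd
            have hv02 : v 0 = v 1 * s := by
              rw [hs_def]
              field_simp
            have hv : v = v 1 • wvec α x y s := by
              funext i
              fin_cases i <;> simp [wvec, h2, h3, hv02] <;> ring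
            rcases mul_eq_zero.mp hfac with h | h
            · left
              rw [hv, Submodule.span_singleton_smul_eq (IsUnit.mk0 _ hv1), sub_eq_zero.mp h]
            · right
              have hst' : s = t' := by
                rw [ht'_def]
                field_simp
                linear_combination h
              rw [hv, Submodule.span_singleton_smul_eq (IsUnit.mk0 _ hv1), hst']
          · have hmem : ∀ u : F, d * u ^ 2 + u - α * d = 0 →
                Submodule.span F {wvec α x y u} ∈
                  QuadricPoints (ellQuadricAlpha F α) ∩ {p | p ≤ lineXYAlpha F α x y} := by
              intro u hur
              refine ⟨⟨wvec α x y u, wvec_ne_zero, ?_, rfl⟩, ?_⟩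
              · show wvec α x y u 0 * wvec α x y u 1 + wvec α x y u 2 ^ 2
                  - α * wvec α x y u 3 ^ 2 = 0
                simp only [wvec, Matrix.cons_val_zero, Matrix.cons_val_one, Matrix.head_cons,
                  Matrix.cons_val_two, Matrix.tail_cons, Matrix.cons_val_three]
                rw [hd_def] at hur
                linear_combination hur
              · exact (Submodule.span_singleton_le_iff_mem _ _).mpr wvec_mem
            rintro (rfl | rfl)
            · exact hmem t ht
            · exact hmem t' ht'
      · left
        ext p
        simp only [Set.mem_empty_iff_false, iff_false]
        intro hp
        obtain ⟨v, hv0, hQ, hvl, rfl⟩ := point_on_lineXY hp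
        obtain ⟨h2, h3⟩ := mem_lineXY.mp hvl
        have hv1 : v 1 ≠ 0 := by
          intro h1
          have hz : d * v 0 ^ 2 = 0 := by
            rw [hd_def]
            linear_combination hQ + (-(v 0) + α * (x^2 - α*y^2) * (v 1)) * h1
          have hv00 : v 0 = 0 := by
            have := (mul_eq_zero.mp hz).resolve_left hd
            exact pow_eq_zero_iff (by norm_num) |>.mp this
          apply hv0
          funext i
          fin_cases i <;> simp [hv00, h1, h2, h3]
        refine hroot ⟨v 0 / v 1, ?_⟩
        field_simp
        linear_combination hQ
  · -- line L_∞ : no points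
    left
    rw [Set.mem_singleton_iff] at hinf
    subst hinf
    ext p
    simp only [Set.mem_empty_iff_false, iff_false]
    rintro ⟨⟨v, hv0, hQ, rfl⟩, hle⟩
    have hvl : v ∈ lineInf F := hle (Submodule.mem_span_singleton_self v)
    obtain ⟨h0, h1⟩ := mem_lineInf.mp hvl
    rw [ellQuadricAlpha, h0, h1] at hQ
    have h23 : v 2 ^ 2 - α * v 3 ^ 2 = 0 := by linear_combination hQ
    obtain ⟨h2, h3⟩ := aniso hαns h23
    apply hv0
    funext i
    fin_cases i <;> simp [h0, h1, h2, h3]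

def gpt (α : F) (p : F × F) : Submodule F (Fin 4 → F) :=
  Submodule.span F {![1, α * p.2 ^ 2 - p.1 ^ 2, p.1, p.2]}

lemma gpt_inj {α : F} : Function.Injective (gpt (F := F) α) := by
  rintro ⟨s, t⟩ ⟨s', t'⟩ h
  rw [gpt, gpt] at h
  have hw : (![1, α * t' ^ 2 - s' ^ 2, s', t'] : Fin 4 → F) ≠ 0 := by
    intro h'
    have := congrFun h' 0
    simp at this
  obtain ⟨c, hc, hcs⟩ := span_singleton_eq_smul hw h
  have h0 := congrFun hcs 0
  simp at h0
  have h2 := congrFun hcs 2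
  have h3 := congrFun hcs 3
  simp [← h0] at h2 h3
  simp [h2, h3]

lemma e2_notin_gpt {α : F} :
    Submodule.span F {(![0,1,0,0] : Fin 4 → F)} ∉ Set.range (gpt (F := F) α) := by
  rintro ⟨⟨s, t⟩, h⟩
  rw [gpt] at h
  have hw : (![0,1,0,0] : Fin 4 → F) ≠ 0 := by
    intro h'
    have := congrFun h' 1
    simp at this
  obtain ⟨c, hc, hcs⟩ := span_singleton_eq_smul hw h
  have h0 := congrFun hcs 0
  have h1 := congrFun hcs 1
  simp at h0 h1
  rw [← h0, zero_mul] at h1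
  exact one_ne_zero h1

lemma quadric_eq {α : F} (hαns : ¬ IsSquare α) :
    QuadricPoints (ellQuadricAlpha F α) =
      insert (Submodule.span F {(![0,1,0,0] : Fin 4 → F)}) (Set.range (gpt (F := F) α)) := by
  ext p
  simp only [Set.mem_insert_iff, Set.mem_range]
  constructor
  · rintro ⟨v, hv0, hQ, rfl⟩
    rw [ellQuadricAlpha] at hQ
    by_cases h0 : v 0 = 0
    · left
      have h23 : v 2 ^ 2 - α * v 3 ^ 2 = 0 := by linear_combination hQ - v 1 * h0
      obtain ⟨h2, h3⟩ := aniso hαns h23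
      have h1 : v 1 ≠ 0 := by
        intro h1
        apply hv0
        funext i
        fin_cases i <;> simp [h0, h1, h2, h3]
      have hv : v = v 1 • ![0,1,0,0] := by
        funext i
        fin_cases i <;> simp [h0, h2, h3]
      rw [hv, Submodule.span_singleton_smul_eq (IsUnit.mk0 _ h1)]
    · right
      refine ⟨(v 2 / v 0, v 3 / v 0), ?_⟩
      rw [gpt]
      have h1 : v 1 = v 0 * (α * (v 3 / v 0) ^ 2 - (v 2 / v 0) ^ 2) := by
        field_simp
        linear_combination hQ
      have hv : v = v 0 • ![1, α * (v 3 / v 0) ^ 2 - (v 2 / v 0) ^ 2, v 2 / v 0, v 3 / v 0] := by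
        funext i
        fin_cases i <;> simp [h1] <;> field_simp
      rw [← Submodule.span_singleton_smul_eq (IsUnit.mk0 _ h0)
        (![1, α * (v 3 / v 0) ^ 2 - (v 2 / v 0) ^ 2, v 2 / v 0, v 3 / v 0]), ← hv]
  · rintro (rfl | ⟨⟨s, t⟩, rfl⟩)
    · refine ⟨![0,1,0,0], ?_, ?_, rfl⟩
      · intro h'
        have := congrFun h' 1
        simp at this
      · simp [ellQuadricAlpha]
    · refine ⟨![1, α * t ^ 2 - s ^ 2, s, t], ?_, ?_, rfl⟩
      · intro h'
        have := congrFun h' 0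
        simp at this
      · simp only [ellQuadricAlpha]
        show 1 * (α * t ^ 2 - s ^ 2) + s ^ 2 - α * t ^ 2 = 0
        ring

lemma quadric_ncard [Fintype F] {α : F} (hαns : ¬ IsSquare α) :
    (QuadricPoints (ellQuadricAlpha F α)).ncard = Fintype.card F ^ 2 + 1 := by
  rw [quadric_eq hαns, Set.ncard_insert_of_notMem e2_notin_gpt (Set.toFinite _),
    ← Set.image_univ, Set.ncard_image_of_injective _ gpt_inj, Set.ncard_univ]
  rw [Nat.card_eq_fintype_card, Fintype.card_prod]
  ring

lemma finrank_lineXY {α x y : F} : Module.finrank F (lineXYAlpha F α x y) = 2 := by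
  rw [lineXYAlpha]
  apply finrank_span_pair
  intro s t h
  have h0 := congrFun h 0
  have h1 := congrFun h 1
  simp at h0 h1
  exact ⟨h0, h1⟩

lemma finrank_lineInf : Module.finrank F (lineInf F) = 2 := by
  rw [lineInf]
  apply finrank_span_pair
  intro s t h
  have h2 := congrFun h 2
  have h3 := congrFun h 3
  simp at h2 h3
  exact ⟨h2, h3⟩

lemma spread_eq {α : F} : spreadAlpha F α =
    insert (lineInf F) (Set.range (fun p : F × F => lineXYAlpha F α p.1 p.2)) := by
  rw [spreadAlpha, Set.union_singleton]
  congr 1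
  ext l
  simp only [Set.mem_setOf_eq, Set.mem_range, Prod.exists]
  constructor
  · rintro ⟨x, y, rfl⟩
    exact ⟨x, y, rfl⟩
  · rintro ⟨x, y, rfl⟩
    exact ⟨x, y, rfl⟩

lemma spread_ncard [Fintype F] {α : F} :
    (spreadAlpha F α).ncard = Fintype.card F ^ 2 + 1 := by
  have hinj : Function.Injective (fun p : F × F => lineXYAlpha F α p.1 p.2) := by
    rintro ⟨x, y⟩ ⟨x', y'⟩ h
    obtain ⟨h1, h2⟩ := lineXY_inj h
    rw [Prod.mk.injEq]
    exact ⟨h1, h2⟩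
  have hnm : lineInf F ∉ Set.range (fun p : F × F => lineXYAlpha F α p.1 p.2) := by
    rintro ⟨⟨x, y⟩, h⟩
    exact lineXY_ne_Inf h
  rw [spread_eq, Set.ncard_insert_of_notMem hnm (Set.toFinite _), ← Set.image_univ,
    Set.ncard_image_of_injective _ hinj, Set.ncard_univ, Nat.card_eq_fintype_card,
    Fintype.card_prod]
  ring

lemma spread_disjoint {α : F} (hαns : ¬ IsSquare α) :
    ∀ l₁ ∈ spreadAlpha F α, ∀ l₂ ∈ spreadAlpha F α, l₁ ≠ l₂ → l₁ ⊓ l₂ = ⊥ := by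
  rintro l₁ (⟨x, y, rfl⟩ | h1) l₂ (⟨x', y', rfl⟩ | h2) hne
  · apply disj_XY_XY hαns
    rintro ⟨rfl, rfl⟩
    exact hne rfl
  · rw [Set.mem_singleton_iff] at h2
    subst h2
    exact disj_XY_Inf
  · rw [Set.mem_singleton_iff] at h1
    subst h1
    rw [inf_comm]
    exact disj_XY_Inf
  · rw [Set.mem_singleton_iff] at h1 h2
    subst h1; subst h2
    exact absurd rfl hne

lemma spread_cover {α : F} (hαns : ¬ IsSquare α) (v : Fin 4 → F) :
    ∃ l ∈ spreadAlpha F α, v ∈ l := by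
  rcases covering hαns v with ⟨x, y, hm, -⟩ | ⟨hm, -, -⟩
  · exact ⟨lineXYAlpha F α x y, Or.inl ⟨x, y, rfl⟩, hm⟩
  · exact ⟨lineInf F, Or.inr rfl, hm⟩

end Helpers

/-- For `q ≡ 1 (mod 4)` and `α` a non-square in `𝔽_q^×`, the Desarguesian spread
`𝒮 = { L_{x,y} } ∪ { L_∞ }` is a line spread of `PG(3,q)` without tangent lines to the
elliptic quadric `X₀X₁ + X₂² - αX₃² = 0`; hence exactly `(q²+1)/2` of its members are
2-secants to this quadric. -/
theorem spreadAlpha_is_spread_without_tangents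
    {q : ℕ} (hqpp : IsPrimePow q) (hq4 : q % 4 = 1)
    {F : Type} [Field F] [Fintype F] (hcard : Fintype.card F = q)
    (α : F) (hα0 : α ≠ 0) (hαns : ¬ IsSquare α) :
    (spreadAlpha F α).ncard = q ^ 2 + 1 ∧
    (∀ l ∈ spreadAlpha F α, Module.finrank F l = 2) ∧
    (∀ l₁ ∈ spreadAlpha F α, ∀ l₂ ∈ spreadAlpha F α, l₁ ≠ l₂ → l₁ ⊓ l₂ = ⊥) ∧
    (∀ v : Fin 4 → F, ∃ l ∈ spreadAlpha F α, v ∈ l) ∧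
    (∀ l ∈ spreadAlpha F α,
      (QuadricPoints (ellQuadricAlpha F α) ∩ {p | p ≤ l}).ncard ≠ 1) ∧
    {l ∈ spreadAlpha F α |
        (QuadricPoints (ellQuadricAlpha F α) ∩ {p | p ≤ l}).ncard = 2}.ncard
      = (q ^ 2 + 1) / 2 := by
  have hsq : IsSquare (-1 : F) := by
    rw [FiniteField.isSquare_neg_one_iff, hcard]
    omega
  refine ⟨by rw [spread_ncard, hcard], ?_, spread_disjoint hαns, spread_cover hαns, ?_, ?_⟩
  · rintro l (⟨x, y, rfl⟩ | hinf)
    · exact finrank_lineXY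
    · rw [Set.mem_singleton_iff] at hinf
      subst hinf
      exact finrank_lineInf
  · intro l hl
    rcases perline_dichotomy hsq hα0 hαns hl with hE | ⟨p1, p2, hpp, hPl⟩
    · rw [hE]
      simp
    · rw [hPl, Set.ncard_pair hpp]
      omega
  · classical
    set P := QuadricPoints (ellQuadricAlpha F α) with hP
    set S2 := {l ∈ spreadAlpha F α | (P ∩ {p | p ≤ l}).ncard = 2} with hS2
    have hPbot : ∀ p ∈ P, p ≠ ⊥ := by
      rintro p ⟨v, hv, -, rfl⟩ h
      exact hv (Submodule.span_singleton_eq_bot.mp h)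
    have key : 2 * S2.ncard = P.ncard := by
      have hfin2 : S2.Finite := Set.toFinite _
      have hfinP : P.Finite := Set.toFinite _
      rw [Set.ncard_eq_toFinset_card _ hfin2, Set.ncard_eq_toFinset_card _ hfinP]
      have hU : hfinP.toFinset = hfin2.toFinset.biUnion
          (fun l => (P ∩ {p | p ≤ l}).toFinite.toFinset) := by
        ext p
        simp only [Set.Finite.mem_toFinset, Finset.mem_biUnion]
        constructor
        · intro hp
          obtain ⟨v, hv0, hQv, rfl⟩ := hp
          obtain ⟨l, hl, hvl⟩ := spread_cover hαns v
          have hmem : Submodule.span F {v} ∈ P ∩ {p | p ≤ l} :=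
            ⟨⟨v, hv0, hQv, rfl⟩, (Submodule.span_singleton_le_iff_mem _ _).mpr hvl⟩
          refine ⟨l, ?_, ?_⟩
          · refine ⟨hl, ?_⟩
            rcases perline_dichotomy hsq hα0 hαns hl with hE | ⟨p1, p2, hpp, hPl⟩
            · rw [hE] at hmem
              exact absurd hmem (Set.notMem_empty _)
            · rw [hPl, Set.ncard_pair hpp]
          · exact hmem
        · rintro ⟨l, -, hp⟩
          exact hp.1
      rw [hU, Finset.card_biUnion]
      · rw [Finset.sum_congr rfl (fun l hl => ?_), Finset.sum_const, smul_eq_mul, mul_comm]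
        rw [Set.Finite.mem_toFinset] at hl
        rw [← Set.ncard_eq_toFinset_card _ ((P ∩ {p | p ≤ l}).toFinite)]
        exact hl.2
      · intro a ha b hb hab
        rw [Finset.mem_coe, Set.Finite.mem_toFinset] at ha hb
        rw [Function.onFun, Finset.disjoint_left]
        intro p hpa hpb
        rw [Set.Finite.mem_toFinset] at hpa hpb
        have hple : p ≤ a ⊓ b := le_inf hpa.2 hpb.2
        rw [spread_disjoint hαns a ha.1 b hb.1 hab, le_bot_iff] at hple
        exact hPbot p hpa.1 hple
    rw [hP, quadric_ncard hαns, hcard] at key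
    have hq2 : q ^ 2 % 2 = 1 := by
      have hodd : q % 2 = 1 := by omega
      rw [Nat.pow_mod, hodd]
    omega
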